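/- Let g = g₁ ⊕ ⋯ ⊕ gₙ be a direct sum decomposition of a Lie algebra into subspaces such that gᵢ + gⱼ is a Lie subalgebra for every pair i,j. For arbitrary pairwise distinct scalars λ₁,…,λₙ, the operator N defined by N|_{gᵢ} = λᵢ Id is a Nijenhuis operator. -/

import Mathlib

/-- If `g = g₁ ⊕ ⋯ ⊕ gₙ` is a direct sum of subspaces such that `gᵢ + gⱼ` is a Lie
subalgebra for all `i,j`, then the operator acting as `λᵢ·Id` on `gᵢ` (with pairwise
distinct eigenvalues) is Nijenhuis. -/
theorem stmt7 (g : Type*) [LieRing g] [LieAlgebra ℂ g] [FiniteDimensional ℂ g]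
    (n : ℕ) (V : Fin n → Submodule ℂ g)
    (hV : DirectSum.IsInternal V)
    (hsub : ∀ i j : Fin n, ∀ x ∈ V i, ∀ y ∈ V j, ⁅x, y⁆ ∈ V i ⊔ V j)
    (lam : Fin n → ℂ) (hlam : Function.Injective lam)
    (N : g →ₗ[ℂ] g) (hNdef : ∀ i : Fin n, ∀ x ∈ V i, N x = lam i • x) :
    ∀ x y : g, ⁅N x, N y⁆ - N (⁅N x, y⁆ + ⁅x, N y⁆) + N (N ⁅x, y⁆) = 0 := by
  -- package the Nijenhuis expression as a bilinear map
  set B : g →ₗ[ℂ] g →ₗ[ℂ] g := LinearMap.mk₂ ℂ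
    (fun x y => ⁅N x, N y⁆ - N (⁅N x, y⁆ + ⁅x, N y⁆) + N (N ⁅x, y⁆))
    (by intro x x' y; simp [add_lie, lie_add, map_add]; abel)
    (by intro c x y; simp [smul_lie, lie_smul, map_smul, smul_add, smul_sub])
    (by intro x y y'; simp [add_lie, lie_add, map_add]; abel)
    (by intro c x y; simp [smul_lie, lie_smul, map_smul, smul_add, smul_sub])
    with hB
  have htop : (⨆ i, V i) = ⊤ := hV.submodule_iSup_eq_top
  have key : ∀ x y : g, B x y = 0 := by
    intro x y
    have hx : x ∈ ⨆ i, V i := htop ▸ Submodule.mem_top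
    have hy : y ∈ ⨆ i, V i := htop ▸ Submodule.mem_top
    refine Submodule.iSup_induction (motive := fun x => B x y = 0) V hx ?_ (by simp [hB]) ?_
    · intro i x hxi
      refine Submodule.iSup_induction (motive := fun y => B x y = 0) V hy ?_ (by simp [hB]) ?_
      · intro j y hyj
        obtain ⟨a, ha, b, hb, hab⟩ := Submodule.mem_sup.mp (hsub i j x hxi y hyj)
        have hNx := hNdef i x hxi
        have hNy := hNdef j y hyj
        have hNa := hNdef i a ha
        have hNb := hNdef j b hb
        simp only [hB, LinearMap.mk₂_apply, hNx, hNy, lie_smul, smul_lie,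
          ← hab, map_add, map_smul, hNa, hNb]
        module
      · intro y₁ y₂ h₁ h₂; simp [map_add, h₁, h₂]
    · intro x₁ x₂ h₁ h₂; simp [map_add, h₁, h₂]
  intro x y
  have := key x y
  simpa [hB] using this
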